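/- Let Γ ∈ C_n, and suppose adding an edge e of color magenta between vertices p, q in the same component of Γ creates a cycle that is not monochromatic; specifically: (1) if p, q lie in different components of both Γ_my and Γ_mc, then Σ(Γ ∪ e) = Σ(Γ) - 2; (2) if p, q lie in the same component of exactly one of Γ_my, Γ_mc, then Σ(Γ ∪ e) = Σ(Γ) - 1. -/

import Mathlib

/-- The three edge colors for graphs in the class `C_n`. -/
inductive Col : Type
  | magenta | yellow | cyan
  deriving DecidableEq

/-- A three-colored loopless multigraph with at most one edge of each color between
any pair of vertices is the same data as three simple graphs `Gm`, `Gy`, `Gc`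
(the magenta, yellow and cyan edges).  `colG Gm Gy Gc x` is the simple graph of
edges of color `x`. -/
def colG {V : Type*} (Gm Gy Gc : SimpleGraph V) : Col → SimpleGraph V
  | Col.magenta => Gm
  | Col.yellow => Gy
  | Col.cyan => Gc

open scoped Classical in
/-- The function `Σ(Γ) = ∑_{C ∈ CC(Γ)} (val_my C + val_yc C + val_mc C - 2)`,
where `val_colors C` is the number of connected components of the induced subgraph
of the two-colored subgraph `Γ_colors` on the vertex set of the component `C`. -/
noncomputable def SigmaFn {V : Type*} [Fintype V] (Gm Gy Gc : SimpleGraph V) : ℕ :=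
  ∑ C : (Gm ⊔ Gy ⊔ Gc).ConnectedComponent,
    (Fintype.card
        ((Gm ⊔ Gy).induce {v : V | (Gm ⊔ Gy ⊔ Gc).connectedComponentMk v = C}).ConnectedComponent
      + Fintype.card
        ((Gy ⊔ Gc).induce {v : V | (Gm ⊔ Gy ⊔ Gc).connectedComponentMk v = C}).ConnectedComponent
      + Fintype.card
        ((Gm ⊔ Gc).induce {v : V | (Gm ⊔ Gy ⊔ Gc).connectedComponentMk v = C}).ConnectedComponent
      - 2)

namespace Stmt16Aux

open SimpleGraph

variable {V : Type*}

lemma adj_sup_edge {H : SimpleGraph V} {p q u v : V} (hpq : p ≠ q) :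
    (H ⊔ SimpleGraph.fromEdgeSet {s(p,q)}).Adj u v ↔
      H.Adj u v ∨ (u = p ∧ v = q) ∨ (u = q ∧ v = p) := by
  simp only [sup_adj, fromEdgeSet_adj, Set.mem_singleton_iff, Sym2.eq_iff]
  constructor
  · rintro (h | ⟨(⟨rfl, rfl⟩ | ⟨rfl, rfl⟩), _⟩) <;> tauto
  · rintro (h | ⟨rfl, rfl⟩ | ⟨rfl, rfl⟩) <;> tauto

lemma reachable_sup_edge {H : SimpleGraph V} {p q : V} (hpq : p ≠ q) (u v : V) :
    (H ⊔ SimpleGraph.fromEdgeSet {s(p,q)}).Reachable u v ↔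
      H.Reachable u v ∨ (H.Reachable u p ∧ H.Reachable q v) ∨
        (H.Reachable u q ∧ H.Reachable p v) := by
  constructor
  · rintro ⟨w⟩
    induction w with
    | nil => exact Or.inl (Reachable.refl _)
    | @cons a b c h w ih =>
      rcases (adj_sup_edge hpq).1 h with h' | ⟨rfl, rfl⟩ | ⟨rfl, rfl⟩
      · rcases ih with h1 | ⟨h1, h2⟩ | ⟨h1, h2⟩
        · exact Or.inl (h'.reachable.trans h1)
        · exact Or.inr (Or.inl ⟨h'.reachable.trans h1, h2⟩)
        · exact Or.inr (Or.inr ⟨h'.reachable.trans h1, h2⟩)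
      · rcases ih with h1 | ⟨h1, h2⟩ | ⟨h1, h2⟩
        · exact Or.inr (Or.inl ⟨Reachable.refl _, h1⟩)
        · exact Or.inr (Or.inl ⟨Reachable.refl _, h2⟩)
        · exact Or.inl h2
      · rcases ih with h1 | ⟨h1, h2⟩ | ⟨h1, h2⟩
        · exact Or.inr (Or.inr ⟨Reachable.refl _, h1⟩)
        · exact Or.inl h2
        · exact Or.inr (Or.inr ⟨Reachable.refl _, h2⟩)
  · have hle : H ≤ H ⊔ SimpleGraph.fromEdgeSet {s(p,q)} := le_sup_left
    have hpq' : (H ⊔ SimpleGraph.fromEdgeSet {s(p,q)}).Reachable p q :=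
      ((adj_sup_edge hpq).2 (Or.inr (Or.inl ⟨rfl, rfl⟩))).reachable
    rintro (h | ⟨h1, h2⟩ | ⟨h1, h2⟩)
    · exact h.mono hle
    · exact ((h1.mono hle).trans hpq').trans (h2.mono hle)
    · exact ((h1.mono hle).trans hpq'.symm).trans (h2.mono hle)

lemma reachable_sup_edge_of_reachable {H : SimpleGraph V} {p q : V} (hpq : p ≠ q)
    (hr : H.Reachable p q) (u v : V) :
    (H ⊔ SimpleGraph.fromEdgeSet {s(p,q)}).Reachable u v ↔ H.Reachable u v := by
  rw [reachable_sup_edge hpq]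
  constructor
  · rintro (h | ⟨h1, h2⟩ | ⟨h1, h2⟩)
    · exact h
    · exact (h1.trans hr).trans h2
    · exact (h1.trans hr.symm).trans h2
  · exact Or.inl

/-- Equivalence of connected components of graphs with the same reachability relation. -/
noncomputable def ccEquiv {H H' : SimpleGraph V}
    (h : ∀ u v, H.Reachable u v ↔ H'.Reachable u v) :
    H.ConnectedComponent ≃ H'.ConnectedComponent where
  toFun := ConnectedComponent.lift (fun v => H'.connectedComponentMk v)
    (fun u v w _ => ConnectedComponent.sound ((h u v).1 w.reachable))
  invFun := ConnectedComponent.lift (fun v => H.connectedComponentMk v)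
    (fun u v w _ => ConnectedComponent.sound ((h u v).2 w.reachable))
  left_inv := by apply ConnectedComponent.ind; intro v; rfl
  right_inv := by apply ConnectedComponent.ind; intro v; rfl

lemma ccEquiv_mk {H H' : SimpleGraph V} (h : ∀ u v, H.Reachable u v ↔ H'.Reachable u v)
    (v : V) : ccEquiv h (H.connectedComponentMk v) = H'.connectedComponentMk v := rfl

lemma mk_eq_ccEquiv_iff {H H' : SimpleGraph V}
    (h : ∀ u v, H.Reachable u v ↔ H'.Reachable u v) (v : V) (C : H.ConnectedComponent) :
    H'.connectedComponentMk v = ccEquiv h C ↔ H.connectedComponentMk v = C := by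
  induction C using ConnectedComponent.ind with
  | _ w => rw [ccEquiv_mk, ConnectedComponent.eq, ConnectedComponent.eq, h]

lemma natCard_cc_eq {H H' : SimpleGraph V}
    (h : ∀ u v, H.Reachable u v ↔ H'.Reachable u v) :
    Nat.card H.ConnectedComponent = Nat.card H'.ConnectedComponent :=
  Nat.card_congr (ccEquiv h)

lemma induce_reachable_iff {H : SimpleGraph V} {S : Set V}
    (hS : ∀ u v, u ∈ S → H.Adj u v → v ∈ S) {u v : V} (hu : u ∈ S) (hv : v ∈ S) :
    (H.induce S).Reachable ⟨u, hu⟩ ⟨v, hv⟩ ↔ H.Reachable u v := by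
  constructor
  · intro h
    exact h.map (SimpleGraph.Embedding.induce S).toHom
  · rintro ⟨w⟩
    induction w with
    | nil => rfl
    | @cons a b c h w ih =>
      have hb : b ∈ S := hS a b hu h
      have hadj : (H.induce S).Adj ⟨a, hu⟩ ⟨b, hb⟩ := h
      exact hadj.reachable.trans (ih hb hv)

/-- Adding an edge between two non-reachable vertices drops the component count by one. -/
lemma card_cc_sup_edge [Finite V] {H : SimpleGraph V} {p q : V} (hpq : p ≠ q)
    (hn : ¬ H.Reachable p q) :
    Nat.card (H ⊔ SimpleGraph.fromEdgeSet {s(p,q)}).ConnectedComponent + 1 =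
      Nat.card H.ConnectedComponent := by
  classical
  set H' := H ⊔ SimpleGraph.fromEdgeSet {s(p,q)} with hH'
  have hle : H ≤ H' := le_sup_left
  set F : H.ConnectedComponent → H'.ConnectedComponent :=
    ConnectedComponent.lift (fun v => H'.connectedComponentMk v)
      (fun u v w _ => ConnectedComponent.sound ((w.reachable.mono hle))) with hF
  have key : ∀ u v : V, H'.Reachable u v ↔
      H.Reachable u v ∨ (H.Reachable u p ∧ H.Reachable q v) ∨
        (H.Reachable u q ∧ H.Reachable p v) := reachable_sup_edge hpq
  have hbij : Function.Bijective
      (fun c : {c : H.ConnectedComponent // c ≠ H.connectedComponentMk q} => F c.1) := by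
    constructor
    · rintro ⟨c₁, hc₁⟩ ⟨c₂, hc₂⟩ h
      obtain ⟨u, rfl⟩ := c₁.exists_rep
      obtain ⟨v, rfl⟩ := c₂.exists_rep
      apply Subtype.ext
      have : H'.Reachable u v := ConnectedComponent.exact h
      rcases (key u v).1 this with h1 | ⟨h1, h2⟩ | ⟨h1, h2⟩
      · exact ConnectedComponent.sound h1
      · exact absurd (ConnectedComponent.sound h2.symm) hc₂
      · exact absurd (ConnectedComponent.sound h1) hc₁
    · intro c'
      obtain ⟨v, rfl⟩ := c'.exists_rep
      by_cases hv : H.Reachable q v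
      · refine ⟨⟨H.connectedComponentMk p, ?_⟩, ?_⟩
        · simp only [ne_eq, ConnectedComponent.eq]
          exact hn
        · show H'.connectedComponentMk p = H'.connectedComponentMk v
          exact ConnectedComponent.sound ((key p v).2 (Or.inr (Or.inl ⟨Reachable.refl _, hv⟩)))
      · refine ⟨⟨H.connectedComponentMk v, ?_⟩, rfl⟩
        simp only [ne_eq, ConnectedComponent.eq]
        exact fun h => hv h.symm
  have h1 : Nat.card {c : H.ConnectedComponent // c ≠ H.connectedComponentMk q} =
      Nat.card H'.ConnectedComponent := Nat.card_eq_of_bijective _ hbij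
  have h2 : Nat.card {c : H.ConnectedComponent // c ≠ H.connectedComponentMk q} + 1 =
      Nat.card H.ConnectedComponent := by
    haveI : Fintype H.ConnectedComponent := Fintype.ofFinite _
    have hpos : 0 < Fintype.card H.ConnectedComponent :=
      Fintype.card_pos_iff.2 ⟨H.connectedComponentMk q⟩
    have hcompl := Fintype.card_subtype_compl (fun c : H.ConnectedComponent =>
      c = H.connectedComponentMk q)
    simp only [Fintype.card_subtype_eq] at hcompl
    have hh : Nat.card {c : H.ConnectedComponent // c ≠ H.connectedComponentMk q} =
        Fintype.card {x : H.ConnectedComponent // ¬ x = H.connectedComponentMk q} :=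
      Nat.card_eq_fintype_card
    rw [hh, hcompl, Nat.card_eq_fintype_card]
    omega
  omega

lemma induce_sup (A B : SimpleGraph V) (S : Set V) :
    (A ⊔ B).induce S = A.induce S ⊔ B.induce S := by
  ext a b
  simp [comap_adj]

lemma induce_edge_bot {p q : V} {S : Set V} (hp : p ∉ S) :
    (SimpleGraph.fromEdgeSet {s(p,q)} : SimpleGraph V).induce S = ⊥ := by
  ext a b
  simp only [comap_adj, Function.Embedding.coe_subtype, fromEdgeSet_adj,
    Set.mem_singleton_iff, Sym2.eq_iff, bot_adj, iff_false]
  rintro ⟨(⟨h1, h2⟩ | ⟨h1, h2⟩), -⟩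
  · exact hp (h1 ▸ a.2)
  · exact hp (h2 ▸ b.2)

lemma induce_edge_eq {p q : V} {S : Set V} (hp : p ∈ S) (hq : q ∈ S) :
    (SimpleGraph.fromEdgeSet {s(p,q)} : SimpleGraph V).induce S =
      SimpleGraph.fromEdgeSet {s((⟨p, hp⟩ : S), (⟨q, hq⟩ : S))} := by
  ext a b
  simp only [comap_adj, Function.Embedding.coe_subtype, fromEdgeSet_adj,
    Set.mem_singleton_iff, Sym2.eq_iff, ne_eq, Subtype.ext_iff]

lemma sum_card_induce {V : Type*} [Fintype V] {H G : SimpleGraph V} (hle : H ≤ G)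
    [Fintype G.ConnectedComponent] :
    ∑ C : G.ConnectedComponent,
      Nat.card
        ((H.induce {v : V | G.connectedComponentMk v = C}).ConnectedComponent) =
      Nat.card H.ConnectedComponent := by
  classical
  set S : G.ConnectedComponent → Set V :=
    fun C => {v : V | G.connectedComponentMk v = C} with hS
  have hcl : ∀ (C : G.ConnectedComponent) (u v : V), u ∈ S C → H.Adj u v → v ∈ S C :=
    fun C u v hu h => (ConnectedComponent.connectedComponentMk_eq_of_adj (hle h)).symm.trans hu
  set Φ : (Σ C : G.ConnectedComponent, (H.induce (S C)).ConnectedComponent) →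
      H.ConnectedComponent :=
    fun x => ConnectedComponent.lift (fun (v : S x.1) => H.connectedComponentMk v.1)
      (fun u v w _ => ConnectedComponent.sound
        (w.reachable.map (SimpleGraph.Embedding.induce (S x.1)).toHom)) x.2 with hΦ
  have hbij : Function.Bijective Φ := by
    constructor
    · rintro ⟨C₁, d₁⟩ ⟨C₂, d₂⟩ h
      obtain ⟨⟨u, hu⟩, rfl⟩ := d₁.exists_rep
      obtain ⟨⟨v, hv⟩, rfl⟩ := d₂.exists_rep
      have hr : H.Reachable u v := ConnectedComponent.exact h
      have hC : C₁ = C₂ := hu.symm.trans ((ConnectedComponent.sound (hr.mono hle)).trans hv)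
      subst hC
      exact congrArg (Sigma.mk C₁)
        (ConnectedComponent.sound ((induce_reachable_iff (hcl C₁) hu hv).2 hr))
    · intro c
      obtain ⟨v, rfl⟩ := c.exists_rep
      exact ⟨⟨G.connectedComponentMk v,
        (H.induce (S (G.connectedComponentMk v))).connectedComponentMk ⟨v, rfl⟩⟩, rfl⟩
  calc ∑ C : G.ConnectedComponent, Nat.card ((H.induce (S C)).ConnectedComponent)
      = ∑ C : G.ConnectedComponent,
          Fintype.card ((H.induce (S C)).ConnectedComponent) := by
        refine Finset.sum_congr rfl fun C _ => ?_
        exact Nat.card_eq_fintype_card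
    _ = Fintype.card (Σ C : G.ConnectedComponent, (H.induce (S C)).ConnectedComponent) :=
        (Fintype.card_sigma).symm
    _ = Nat.card (Σ C : G.ConnectedComponent, (H.induce (S C)).ConnectedComponent) :=
        Nat.card_eq_fintype_card.symm
    _ = Nat.card H.ConnectedComponent := Nat.card_eq_of_bijective Φ hbij

lemma SigmaFn_eq {V : Type*} [Fintype V] (Gm Gy Gc : SimpleGraph V) :
    SigmaFn Gm Gy Gc + 2 * Nat.card (Gm ⊔ Gy ⊔ Gc).ConnectedComponent =
      Nat.card (Gm ⊔ Gy).ConnectedComponent + Nat.card (Gy ⊔ Gc).ConnectedComponent +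
        Nat.card (Gm ⊔ Gc).ConnectedComponent := by
  classical
  simp only [SigmaFn, ← Nat.card_eq_fintype_card]
  have hpos : ∀ (H : SimpleGraph V) (C : (Gm ⊔ Gy ⊔ Gc).ConnectedComponent),
      1 ≤ Nat.card
        ((H.induce {v : V | (Gm ⊔ Gy ⊔ Gc).connectedComponentMk v = C}).ConnectedComponent) := by
    intro H C
    obtain ⟨v, hv⟩ := C.exists_rep
    haveI : Nonempty
        ((H.induce {w : V | (Gm ⊔ Gy ⊔ Gc).connectedComponentMk w = C}).ConnectedComponent) :=
      ⟨SimpleGraph.connectedComponentMk _ ⟨v, hv⟩⟩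
    exact Nat.card_pos
  have h2N : 2 * Nat.card (Gm ⊔ Gy ⊔ Gc).ConnectedComponent =
      ∑ _C : (Gm ⊔ Gy ⊔ Gc).ConnectedComponent, 2 := by
    rw [Finset.sum_const, Finset.card_univ, smul_eq_mul, Nat.card_eq_fintype_card, mul_comm]
  rw [h2N, ← Finset.sum_add_distrib]
  have hterm : ∀ C ∈ (Finset.univ : Finset (Gm ⊔ Gy ⊔ Gc).ConnectedComponent),
      (Nat.card ((Gm ⊔ Gy).induce
          {v : V | (Gm ⊔ Gy ⊔ Gc).connectedComponentMk v = C}).ConnectedComponent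
        + Nat.card ((Gy ⊔ Gc).induce
          {v : V | (Gm ⊔ Gy ⊔ Gc).connectedComponentMk v = C}).ConnectedComponent
        + Nat.card ((Gm ⊔ Gc).induce
          {v : V | (Gm ⊔ Gy ⊔ Gc).connectedComponentMk v = C}).ConnectedComponent - 2) + 2 =
      (Nat.card ((Gm ⊔ Gy).induce
          {v : V | (Gm ⊔ Gy ⊔ Gc).connectedComponentMk v = C}).ConnectedComponent
        + Nat.card ((Gy ⊔ Gc).induce
          {v : V | (Gm ⊔ Gy ⊔ Gc).connectedComponentMk v = C}).ConnectedComponent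
        + Nat.card ((Gm ⊔ Gc).induce
          {v : V | (Gm ⊔ Gy ⊔ Gc).connectedComponentMk v = C}).ConnectedComponent) := by
    intro C _
    have h1 := hpos (Gm ⊔ Gy) C
    have h2 := hpos (Gy ⊔ Gc) C
    omega
  rw [Finset.sum_congr rfl hterm]
  simp only [Finset.sum_add_distrib]
  have hmy : (Gm ⊔ Gy : SimpleGraph V) ≤ Gm ⊔ Gy ⊔ Gc := le_sup_left
  have hyc : (Gy ⊔ Gc : SimpleGraph V) ≤ Gm ⊔ Gy ⊔ Gc :=
    sup_le ((le_sup_right : Gy ≤ Gm ⊔ Gy).trans le_sup_left) le_sup_right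
  have hmc : (Gm ⊔ Gc : SimpleGraph V) ≤ Gm ⊔ Gy ⊔ Gc :=
    sup_le ((le_sup_left : Gm ≤ Gm ⊔ Gy).trans le_sup_left) le_sup_right
  rw [sum_card_induce hmy, sum_card_induce hyc, sum_card_induce hmc]

end Stmt16Aux

set_option maxHeartbeats 1000000 in
open SimpleGraph Stmt16Aux in
theorem stmt_16 {V : Type*} [Fintype V] (Gm Gy Gc : SimpleGraph V) (p q : V)
    (hpq : p ≠ q) (hadj : ¬ Gm.Adj p q) (hsame : (Gm ⊔ Gy ⊔ Gc).Reachable p q)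
    (Gm' : SimpleGraph V) (hGm' : Gm' = Gm ⊔ SimpleGraph.fromEdgeSet {s(p, q)}) :
    ((¬ (Gm ⊔ Gy).Reachable p q ∧ ¬ (Gm ⊔ Gc).Reachable p q) →
        SigmaFn Gm' Gy Gc + 2 = SigmaFn Gm Gy Gc) ∧
    ((((Gm ⊔ Gy).Reachable p q ∧ ¬ (Gm ⊔ Gc).Reachable p q) ∨
      (¬ (Gm ⊔ Gy).Reachable p q ∧ (Gm ⊔ Gc).Reachable p q)) →
        SigmaFn Gm' Gy Gc + 1 = SigmaFn Gm Gy Gc) := by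
  classical
  subst hGm'
  set e : SimpleGraph V := SimpleGraph.fromEdgeSet {s(p, q)} with he
  have key : SigmaFn (Gm ⊔ e) Gy Gc +
      ((if (Gm ⊔ Gy).Reachable p q then 0 else 1) +
        (if (Gm ⊔ Gc).Reachable p q then 0 else 1)) = SigmaFn Gm Gy Gc := by
    have hN : Nat.card ((Gm ⊔ Gy ⊔ Gc) ⊔ e).ConnectedComponent =
        Nat.card (Gm ⊔ Gy ⊔ Gc).ConnectedComponent :=
      natCard_cc_eq (reachable_sup_edge_of_reachable hpq hsame)
    have E1 := SigmaFn_eq (Gm ⊔ e) Gy Gc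
    rw [sup_right_comm Gm e Gy, sup_right_comm (Gm ⊔ Gy) e Gc, sup_right_comm Gm e Gc,
      hN] at E1
    have E2 := SigmaFn_eq Gm Gy Gc
    have hA : Nat.card ((Gm ⊔ Gy) ⊔ e).ConnectedComponent +
        (if (Gm ⊔ Gy).Reachable p q then 0 else 1) =
          Nat.card (Gm ⊔ Gy).ConnectedComponent := by
      by_cases hr : (Gm ⊔ Gy).Reachable p q
      · rw [if_pos hr, Nat.add_zero]
        exact natCard_cc_eq (reachable_sup_edge_of_reachable hpq hr)
      · rw [if_neg hr]
        exact card_cc_sup_edge hpq hr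
    have hC : Nat.card ((Gm ⊔ Gc) ⊔ e).ConnectedComponent +
        (if (Gm ⊔ Gc).Reachable p q then 0 else 1) =
          Nat.card (Gm ⊔ Gc).ConnectedComponent := by
      by_cases hr : (Gm ⊔ Gc).Reachable p q
      · rw [if_pos hr, Nat.add_zero]
        exact natCard_cc_eq (reachable_sup_edge_of_reachable hpq hr)
      · rw [if_neg hr]
        exact card_cc_sup_edge hpq hr
    omega
  constructor
  · rintro ⟨h1, h2⟩
    rw [if_neg h1, if_neg h2] at key
    exact key
  · rintro (⟨h1, h2⟩ | ⟨h1, h2⟩)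
    · rw [if_pos h1, if_neg h2] at key
      exact key
    · rw [if_neg h1, if_pos h2] at key
      exact key
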